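/- Let π be a profile and ≻₀ a preference satisfying Flexible Condition 1. For any scoring rule S (a weakly decreasing score vector S₁ ≥ S₂ ≥ ... ≥ S_K) and any alternatives a, b with a ≻₀ b, the total score of a in π is at least the total score of b in π. -/

import Mathlib

open Classical

/-- Inversion distance between two preference relations: the number of (ordered
representatives of) unordered pairs ranked oppositely. For strict total orders,
each oppositely-ranked unordered pair {x,y} is counted exactly once. -/
noncomputable def invDist {A : Type*} [Fintype A] (r r' : A → A → Prop) : ℕ :=
  {p : A × A | r p.1 p.2 ∧ r' p.2 p.1}.ncard

/-- Frequency of a preference in a profile (list of preferences). -/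
noncomputable def freq {A : Type*} (π : List (A → A → Prop)) (r : A → A → Prop) : ℕ :=
  {i : Fin π.length | π.get i = r}.ncard

/-- Number of voters in the profile ranking `a` above `b`. -/
noncomputable def votesFor {A : Type*} (π : List (A → A → Prop)) (a b : A) : ℕ :=
  {i : Fin π.length | π.get i a b}.ncard

/-- The preference obtained by swapping alternatives `a` and `b` in the ranking. -/
def swapPref {A : Type*} [DecidableEq A] (a b : A) (r : A → A → Prop) : A → A → Prop :=
  fun x y => r (Equiv.swap a b x) (Equiv.swap a b y)

/-- The (0-based) rank of alternative `x` in preference `r`: the number of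
alternatives ranked strictly above it. The top alternative has rank 0. -/
noncomputable def rank {A : Type*} (r : A → A → Prop) (x : A) : ℕ :=
  {y | r y x}.ncard

/-- Total score of alternative `x` in profile `π` under a scoring vector `S`
(`S j` is the score of the alternative with `j` alternatives above it). -/
noncomputable def totalScore {A : Type*} (π : List (A → A → Prop)) (S : ℕ → ℝ) (x : A) : ℝ :=
  ∑ i : Fin π.length, S (rank (π.get i) x)

section Aux

variable {A : Type*}

lemma swapPref_swapPref [DecidableEq A] (a b : A) (r : A → A → Prop) :
    swapPref a b (swapPref a b r) = r := by
  funext x y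
  simp [swapPref]

lemma swapPref_isSTO [DecidableEq A] (a b : A) (r : A → A → Prop)
    (h : IsStrictTotalOrder A r) : IsStrictTotalOrder A (swapPref a b r) := by
  haveI := h
  refine { trichotomous := ?_, irrefl := ?_, trans := ?_ }
  · intro x y
    rcases trichotomous_of r (Equiv.swap a b x) (Equiv.swap a b y) with h1 | h1 | h1
    · exact fun h2 _ => absurd h1 h2
    · exact fun _ _ => (Equiv.swap a b).injective h1
    · exact fun _ h2 => absurd h1 h2
  · intro x hx
    exact irrefl_of r _ hx
  · intro x y z h1 h2
    exact trans_of r h1 h2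

lemma rank_swapPref [DecidableEq A] (a b : A) (r : A → A → Prop) (x : A) :
    rank (swapPref a b r) x = rank r (Equiv.swap a b x) := by
  unfold rank swapPref
  have himg : (Equiv.swap a b) '' {y | r (Equiv.swap a b y) (Equiv.swap a b x)}
      = {z | r z (Equiv.swap a b x)} := by
    ext z
    constructor
    · rintro ⟨y, hy, rfl⟩
      exact hy
    · intro hz
      exact ⟨Equiv.swap a b z, by simpa using hz, by simp⟩
  rw [← himg, Set.ncard_image_of_injective _ (Equiv.swap a b).injective]

/-- auxiliary injection used in the key inversion-distance lemma -/
noncomputable def auxF {A : Type*} [DecidableEq A] (r0 : A → A → Prop) (a b : A)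
    (p : A × A) : A × A :=
  if p.2 = a then (if r0 b p.1 then (p.1, b) else (p.1, a))
  else if p.2 = b then (p.1, a)
  else if p.1 = a then (b, p.2)
  else if p.1 = b then (if r0 p.2 a then (a, p.2) else (b, p.2))
  else p

/-- auxiliary left inverse of `auxF` -/
noncomputable def auxG {A : Type*} [DecidableEq A] (r0 : A → A → Prop) (a b : A)
    (q : A × A) : A × A :=
  if q.2 = b then (q.1, a)
  else if q.2 = a then (if r0 b q.1 then (q.1, b) else (q.1, a))
  else if q.1 = b then (if r0 q.2 a then (a, q.2) else (b, q.2))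
  else if q.1 = a then (b, q.2)
  else q

/-- Key combinatorial lemma: swapping a pref with `b` above `a` (where `r0 a b`)
strictly decreases inversion distance to `r0`. -/
lemma invDist_swap_lt [Fintype A] [DecidableEq A] {s r0 : A → A → Prop}
    (hs : IsStrictTotalOrder A s) (hr0 : IsStrictTotalOrder A r0)
    {a b : A} (hab : r0 a b) (hba : s b a) :
    invDist (swapPref a b s) r0 < invDist s r0 := by
  haveI := hs; haveI := hr0
  have hne : a ≠ b := by rintro rfl; exact irrefl_of r0 a hab
  have hne' : b ≠ a := fun h => hne h.symm
  have asym_s : ∀ {u v : A}, s u v → s v u → False := fun h1 h2 =>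
    irrefl_of s _ (trans_of s h1 h2)
  have asym_r0 : ∀ {u v : A}, r0 u v → r0 v u → False := fun h1 h2 =>
    irrefl_of r0 _ (trans_of r0 h1 h2)
  have hmap : Set.MapsTo (auxF r0 a b)
      {p : A × A | swapPref a b s p.1 p.2 ∧ r0 p.2 p.1}
      ({p : A × A | s p.1 p.2 ∧ r0 p.2 p.1} \ {(b, a)}) := by
    rintro ⟨x, y⟩ hp
    obtain ⟨h1, h2⟩ := hp
    simp only [swapPref] at h1
    dsimp only at h1 h2
    by_cases hya : y = a
    · rw [hya] at h1 h2
      rw [Equiv.swap_apply_left] at h1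
      have hxa : x ≠ a := fun h => irrefl_of r0 a (h ▸ h2)
      have hxb : x ≠ b := by
        intro h
        rw [h, Equiv.swap_apply_right] at h1
        exact asym_s h1 hba
      rw [Equiv.swap_apply_of_ne_of_ne hxa hxb] at h1
      -- h1 : s x b, h2 : r0 a x
      by_cases hbx : r0 b x
      · have hfv : auxF r0 a b (x, y) = (x, b) := by
          simp only [auxF]
          rw [if_pos hya, if_pos hbx]
        rw [hfv]
        refine ⟨⟨h1, hbx⟩, ?_⟩
        simp only [Set.mem_singleton_iff, Prod.mk.injEq, not_and]
        intro h
        exact absurd h hxb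
      · have hxa' : s x a := by
          rcases trichotomous_of s x a with h' | h' | h'
          · exact h'
          · exact absurd h' hxa
          · exact absurd h1 (fun hh => asym_s hh (trans_of s hba h'))
        have hfv : auxF r0 a b (x, y) = (x, a) := by
          simp only [auxF]
          rw [if_pos hya, if_neg hbx]
        rw [hfv]
        refine ⟨⟨hxa', h2⟩, ?_⟩
        simp only [Set.mem_singleton_iff, Prod.mk.injEq, not_and]
        intro h
        exact absurd h hxb
    · by_cases hyb : y = b
      · rw [hyb] at h1 h2
        rw [Equiv.swap_apply_right] at h1
        have hxa : x ≠ a := by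
          intro h
          rw [h] at h2
          exact asym_r0 hab h2
        have hxb : x ≠ b := fun h => irrefl_of r0 b (h ▸ h2)
        rw [Equiv.swap_apply_of_ne_of_ne hxa hxb] at h1
        -- h1 : s x a, h2 : r0 b x
        have hfv : auxF r0 a b (x, y) = (x, a) := by
          simp only [auxF]
          rw [if_neg hya, if_pos hyb]
        rw [hfv]
        refine ⟨⟨h1, trans_of r0 hab h2⟩, ?_⟩
        simp only [Set.mem_singleton_iff, Prod.mk.injEq, not_and]
        intro h
        exact absurd h hxb
      · have hy : Equiv.swap a b y = y := Equiv.swap_apply_of_ne_of_ne hya hyb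
        rw [hy] at h1
        by_cases hxa : x = a
        · rw [hxa] at h1 h2
          rw [Equiv.swap_apply_left] at h1
          -- h1 : s b y, h2 : r0 y a
          have hfv : auxF r0 a b (x, y) = (b, y) := by
            simp only [auxF]
            rw [if_neg hya, if_neg hyb, if_pos hxa]
          rw [hfv]
          refine ⟨⟨h1, trans_of r0 h2 hab⟩, ?_⟩
          simp only [Set.mem_singleton_iff, Prod.mk.injEq, not_and]
          intro _
          exact hya
        · by_cases hxb : x = b
          · rw [hxb] at h1 h2
            rw [Equiv.swap_apply_right] at h1
            -- h1 : s a y, h2 : r0 y b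
            by_cases hya' : r0 y a
            · have hfv : auxF r0 a b (x, y) = (a, y) := by
                simp only [auxF]
                rw [if_neg hya, if_neg hyb, if_neg hxa, if_pos hxb, if_pos hya']
              rw [hfv]
              refine ⟨⟨h1, hya'⟩, ?_⟩
              simp only [Set.mem_singleton_iff, Prod.mk.injEq, not_and]
              intro h
              exact absurd h hne
            · have hfv : auxF r0 a b (x, y) = (b, y) := by
                simp only [auxF]
                rw [if_neg hya, if_neg hyb, if_neg hxa, if_pos hxb, if_neg hya']
              rw [hfv]
              refine ⟨⟨trans_of s hba h1, h2⟩, ?_⟩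
              simp only [Set.mem_singleton_iff, Prod.mk.injEq, not_and]
              intro _
              exact hya
          · have hx : Equiv.swap a b x = x := Equiv.swap_apply_of_ne_of_ne hxa hxb
            rw [hx] at h1
            have hfv : auxF r0 a b (x, y) = (x, y) := by
              simp only [auxF]
              rw [if_neg hya, if_neg hyb, if_neg hxa, if_neg hxb]
            rw [hfv]
            refine ⟨⟨h1, h2⟩, ?_⟩
            simp only [Set.mem_singleton_iff, Prod.mk.injEq, not_and]
            intro h
            exact absurd h hxb
  have hgf : ∀ p ∈ {p : A × A | swapPref a b s p.1 p.2 ∧ r0 p.2 p.1},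
      auxG r0 a b (auxF r0 a b p) = p := by
    rintro ⟨x, y⟩ hp
    obtain ⟨h1, h2⟩ := hp
    simp only [swapPref] at h1
    dsimp only at h1 h2
    by_cases hya : y = a
    · rw [hya] at h1 h2 ⊢
      rw [Equiv.swap_apply_left] at h1
      have hxa : x ≠ a := fun h => irrefl_of r0 a (h ▸ h2)
      have hxb : x ≠ b := by
        intro h
        rw [h, Equiv.swap_apply_right] at h1
        exact asym_s h1 hba
      by_cases hbx : r0 b x
      · have hfv : auxF r0 a b (x, a) = (x, b) := by simp [auxF, hbx]
        rw [hfv]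
        simp [auxG]
      · have hfv : auxF r0 a b (x, a) = (x, a) := by simp [auxF, hbx]
        rw [hfv]
        simp [auxG, hne, hbx]
    · by_cases hyb : y = b
      · rw [hyb] at h1 h2 ⊢
        -- h2 : r0 b x
        have hfv : auxF r0 a b (x, b) = (x, a) := by simp [auxF, hne']
        rw [hfv]
        simp [auxG, hne, h2]
      · by_cases hxa : x = a
        · rw [hxa] at h1 h2 ⊢
          -- h2 : r0 y a
          have hfv : auxF r0 a b (a, y) = (b, y) := by simp [auxF, hya, hyb]
          rw [hfv]
          simp [auxG, hya, hyb, h2]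
        · by_cases hxb : x = b
          · rw [hxb] at h1 h2 ⊢
            -- h2 : r0 y b
            by_cases hya' : r0 y a
            · have hfv : auxF r0 a b (b, y) = (a, y) := by
                simp [auxF, hya, hyb, hne', hya']
              rw [hfv]
              simp [auxG, hya, hyb, hne]
            · have hfv : auxF r0 a b (b, y) = (b, y) := by
                simp [auxF, hya, hyb, hne', hya']
              rw [hfv]
              simp [auxG, hya, hyb, hya']
          · have hfv : auxF r0 a b (x, y) = (x, y) := by
              simp [auxF, hya, hyb, hxa, hxb]
            rw [hfv]
            simp [auxG, hya, hyb, hxa, hxb]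
  have hinj : Set.InjOn (auxF r0 a b) {p : A × A | swapPref a b s p.1 p.2 ∧ r0 p.2 p.1} :=
    fun p hp q hq h => by rw [← hgf p hp, ← hgf q hq, h]
  have h1 : ({p : A × A | swapPref a b s p.1 p.2 ∧ r0 p.2 p.1}).ncard
      ≤ (({p : A × A | s p.1 p.2 ∧ r0 p.2 p.1} : Set (A × A)) \ {(b, a)}).ncard :=
    Set.ncard_le_ncard_of_injOn (auxF r0 a b) hmap hinj (Set.toFinite _)
  have h2 : (({p : A × A | s p.1 p.2 ∧ r0 p.2 p.1} : Set (A × A)) \ {(b, a)}).ncard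
      < ({p : A × A | s p.1 p.2 ∧ r0 p.2 p.1} : Set (A × A)).ncard :=
    Set.ncard_diff_singleton_lt_of_mem ⟨hba, hab⟩ (Set.toFinite _)
  calc invDist (swapPref a b s) r0
      = ({p : A × A | swapPref a b s p.1 p.2 ∧ r0 p.2 p.1}).ncard := rfl
    _ ≤ _ := h1
    _ < _ := h2

end Aux

/-- Under Flexible Condition 1, for every scoring rule (weakly decreasing score
vector) and alternatives `a ≻₀ b`, the total score of `a` is at least the total
score of `b`. -/
theorem flexible_scoring {A : Type*} [Fintype A]
    (hK : 3 ≤ Fintype.card A)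
    (π : List (A → A → Prop)) (hπ : ∀ r ∈ π, IsStrictTotalOrder A r)
    (r0 : A → A → Prop) (hr0 : IsStrictTotalOrder A r0)
    (hflex : ∀ r' r : A → A → Prop, IsStrictTotalOrder A r' → IsStrictTotalOrder A r →
      freq π r' > freq π r → invDist r' r0 ≤ invDist r r0)
    (S : ℕ → ℝ) (hS : Antitone S)
    (a b : A) (hab : r0 a b) :
    totalScore π S b ≤ totalScore π S a := by
  classical
  haveI := hr0
  have hne : a ≠ b := by rintro rfl; exact irrefl_of r0 a hab
  have hττ : ∀ r : A → A → Prop, swapPref a b (swapPref a b r) = r :=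
    fun r => swapPref_swapPref a b r
  set T : Finset (A → A → Prop) := π.toFinset ∪ π.toFinset.image (swapPref a b) with hT
  have hTmem : ∀ i : Fin π.length, π.get i ∈ T := by
    intro i
    exact Finset.mem_union_left _ (List.mem_toFinset.2 (π.get_mem i))
  have hTsto : ∀ r ∈ T, IsStrictTotalOrder A r := by
    intro r hr
    rcases Finset.mem_union.1 hr with h | h
    · exact hπ r (List.mem_toFinset.1 h)
    · obtain ⟨r', hr', rfl⟩ := Finset.mem_image.1 h
      exact swapPref_isSTO a b r' (hπ r' (List.mem_toFinset.1 hr'))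
  have hTclosed : ∀ r ∈ T, swapPref a b r ∈ T := by
    intro r hr
    rcases Finset.mem_union.1 hr with h | h
    · exact Finset.mem_union_right _ (Finset.mem_image_of_mem _ h)
    · obtain ⟨r', hr', rfl⟩ := Finset.mem_image.1 h
      rw [hττ]
      exact Finset.mem_union_left _ hr'
  -- score difference as sum over preferences
  have key : totalScore π S a - totalScore π S b
      = ∑ r ∈ T, (freq π r : ℝ) * (S (rank r a) - S (rank r b)) := by
    rw [totalScore, totalScore, ← Finset.sum_sub_distrib,
      ← Finset.sum_fiberwise_of_maps_to (fun i _ => hTmem i)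
        (fun i => S (rank (π.get i) a) - S (rank (π.get i) b))]
    refine Finset.sum_congr rfl fun r _ => ?_
    have h1 : ∀ i ∈ Finset.univ.filter (fun i : Fin π.length => π.get i = r),
        S (rank (π.get i) a) - S (rank (π.get i) b) = S (rank r a) - S (rank r b) := by
      intro i hi
      rw [(Finset.mem_filter.1 hi).2]
    rw [Finset.sum_congr rfl h1, Finset.sum_const, nsmul_eq_mul,
      ← Set.toFinset_setOf, ← Set.ncard_eq_toFinset_card']
    rfl
  -- rank facts
  have rank_τ_a : ∀ r : A → A → Prop, rank (swapPref a b r) a = rank r b := by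
    intro r
    rw [rank_swapPref, Equiv.swap_apply_left]
  have rank_τ_b : ∀ r : A → A → Prop, rank (swapPref a b r) b = rank r a := by
    intro r
    rw [rank_swapPref, Equiv.swap_apply_right]
  have rank_le : ∀ r : A → A → Prop, IsStrictTotalOrder A r → r a b →
      rank r a ≤ rank r b := by
    intro r hrsto hrab
    haveI := hrsto
    refine Set.ncard_le_ncard ?_ (Set.toFinite _)
    intro y hy
    exact trans_of r hy hrab
  have freq_le : ∀ r : A → A → Prop, IsStrictTotalOrder A r → r a b →
      freq π (swapPref a b r) ≤ freq π r := by
    intro r hrsto hrab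
    by_contra hcon
    push_neg at hcon
    have hsto' := swapPref_isSTO a b r hrsto
    have hd := hflex (swapPref a b r) r hsto' hrsto hcon
    have hτba : swapPref a b r b a := by
      show r (Equiv.swap a b b) (Equiv.swap a b a)
      rw [Equiv.swap_apply_right, Equiv.swap_apply_left]
      exact hrab
    have hlt := invDist_swap_lt hsto' hr0 hab hτba
    rw [hττ r] at hlt
    omega
  set F : (A → A → Prop) → ℝ := fun r => (freq π r : ℝ) * (S (rank r a) - S (rank r b))
    with hF
  have pair_core : ∀ r : A → A → Prop, IsStrictTotalOrder A r → r a b →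
      0 ≤ F r + F (swapPref a b r) := by
    intro r hrsto hrab
    have h1 : F r + F (swapPref a b r)
        = ((freq π r : ℝ) - (freq π (swapPref a b r) : ℝ)) * (S (rank r a) - S (rank r b)) := by
      rw [hF]
      simp only [rank_τ_a r, rank_τ_b r]
      ring
    rw [h1]
    have h2 : (0:ℝ) ≤ (freq π r : ℝ) - (freq π (swapPref a b r) : ℝ) := by
      have h := freq_le r hrsto hrab
      have h' : (freq π (swapPref a b r) : ℝ) ≤ (freq π r : ℝ) := Nat.cast_le.2 h
      linarith
    have h3 : (0:ℝ) ≤ S (rank r a) - S (rank r b) := by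
      have := hS (rank_le r hrsto hrab)
      linarith
    exact mul_nonneg h2 h3
  have pair : ∀ r ∈ T, 0 ≤ F r + F (swapPref a b r) := by
    intro r hr
    have hrsto := hTsto r hr
    haveI := hrsto
    rcases trichotomous_of r a b with h | h | h
    · exact pair_core r hrsto h
    · exact absurd h hne
    · have hτab : swapPref a b r a b := by
        show r (Equiv.swap a b a) (Equiv.swap a b b)
        rw [Equiv.swap_apply_left, Equiv.swap_apply_right]
        exact h
      have hp := pair_core (swapPref a b r) (swapPref_isSTO a b r hrsto) hτab
      rw [hττ r] at hp
      linarith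
  have hsum_τ : ∑ r ∈ T, F (swapPref a b r) = ∑ r ∈ T, F r := by
    refine Finset.sum_nbij' (swapPref a b) (swapPref a b) hTclosed hTclosed
      (fun r _ => hττ r) (fun r _ => hττ r) (fun r _ => rfl)
  have hnonneg : 0 ≤ ∑ r ∈ T, F r := by
    have h1 : 0 ≤ ∑ r ∈ T, (F r + F (swapPref a b r)) := Finset.sum_nonneg pair
    rw [Finset.sum_add_distrib, hsum_τ] at h1
    linarith
  linarith [hnonneg, key]
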